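/- Let $X$ be a compact metric space and $f:X\to X$ a continuous map. For any $x,y\in X$, if $\lim_{n\to\infty}\frac{1}{n}\sum_{i=0}^{n-1}d(f^i(x),f^i(y))=0$, then $\overline{\omega}(x,f)=\overline{\omega}(y,f)$. -/

import Mathlib

open Filter Metric Set
open scoped Classical Topology

noncomputable def upperDensity (A : Set ℕ) : ℝ :=
  Filter.limsup
    (fun n : ℕ => (((Finset.range n).filter (fun i => i ∈ A)).card : ℝ) / n) Filter.atTop

def HasDensityOne (A : Set ℕ) : Prop :=
  Filter.Tendsto
    (fun n : ℕ => (((Finset.range n).filter (fun i => i ∈ A)).card : ℝ) / n) Filter.atTop (nhds 1)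

def omegaBarSeq {X : Type*} [MetricSpace X] (x : ℕ → X) : Set X :=
  {y | ∀ ε > 0, 0 < upperDensity {i | dist (x i) y < ε}}

def omegaBar {X : Type*} [MetricSpace X] (f : X → X) (x : X) : Set X :=
  omegaBarSeq (fun i => f^[i] x)

private noncomputable def dseq (A : Set ℕ) (n : ℕ) : ℝ :=
  (((Finset.range n).filter (fun i => i ∈ A)).card : ℝ) / n

private lemma div_nat_mono {a b : ℕ} (n : ℕ) (hab : a ≤ b) : (a : ℝ) / n ≤ (b : ℝ) / n := by
  gcongr

private lemma dseq_nonneg (A : Set ℕ) (n : ℕ) : 0 ≤ dseq A n := by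
  unfold dseq; positivity

private lemma dseq_le_one (A : Set ℕ) (n : ℕ) : dseq A n ≤ 1 := by
  unfold dseq
  rcases Nat.eq_zero_or_pos n with h | h
  · simp [h]
  · rw [div_le_one (by exact_mod_cast h)]
    exact_mod_cast (Finset.card_filter_le _ _).trans (by simp)

private lemma bdd_above (A : Set ℕ) :
    IsBoundedUnder (· ≤ ·) atTop (dseq A) :=
  isBoundedUnder_of ⟨1, fun n => dseq_le_one A n⟩

private lemma bdd_below (A : Set ℕ) :
    IsBoundedUnder (· ≥ ·) atTop (dseq A) :=
  isBoundedUnder_of ⟨0, fun n => dseq_nonneg A n⟩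

private lemma upperDensity_eq (A : Set ℕ) : upperDensity A = limsup (dseq A) atTop := rfl

private lemma upperDensity_mono {A B : Set ℕ} (hAB : A ⊆ B) :
    upperDensity A ≤ upperDensity B := by
  rw [upperDensity_eq, upperDensity_eq]
  refine limsup_le_limsup (Eventually.of_forall fun n => ?_)
    ((bdd_below A).isCoboundedUnder_le) (bdd_above B)
  exact div_nat_mono n (Finset.card_le_card
    (Finset.monotone_filter_right _ (by intro i _ hi; exact hAB hi)))

private lemma upperDensity_le_add (A B : Set ℕ) :
    upperDensity A ≤ upperDensity (A \ B) + upperDensity B := by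
  have key : ∀ n, dseq A n ≤ dseq (A \ B) n + dseq B n := by
    intro n
    unfold dseq
    rw [← add_div]
    rw [← Nat.cast_add]
    refine div_nat_mono n ?_
    refine (Finset.card_le_card ?_).trans (Finset.card_union_le _ _)
    intro i hi
    simp only [Finset.mem_filter, Finset.mem_union, Set.mem_diff] at *
    tauto
  rw [upperDensity_eq]
  calc limsup (dseq A) atTop ≤ limsup (dseq (A \ B) + dseq B) atTop := by
        refine limsup_le_limsup (Eventually.of_forall key)
          ((bdd_below A).isCoboundedUnder_le)
          (isBoundedUnder_of ⟨2, fun n => ?_⟩)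
        have h1 := dseq_le_one (A \ B) n; have h2 := dseq_le_one B n
        simp only [Pi.add_apply]; linarith
    _ ≤ upperDensity (A \ B) + upperDensity B :=
        limsup_add_le (bdd_below (A \ B)) (bdd_above (A \ B))
          ((bdd_below B).isCoboundedUnder_le) (bdd_above B)

private lemma upperDensity_zero_of_avg {u : ℕ → ℝ} (hu : ∀ i, 0 ≤ u i)
    (h : Tendsto (fun n : ℕ => (∑ i ∈ Finset.range n, u i) / n) atTop (nhds 0))
    {ε : ℝ} (hε : 0 < ε) :
    upperDensity {i | ε ≤ u i} = 0 := by
  set B : Set ℕ := {i | ε ≤ u i}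
  have key : ∀ n, dseq B n ≤ (1 / ε) * ((∑ i ∈ Finset.range n, u i) / n) := by
    intro n
    unfold dseq
    have hcard : ε * ((Finset.range n).filter (fun i => i ∈ B)).card
        ≤ ∑ i ∈ Finset.range n, u i := by
      calc ε * ((Finset.range n).filter (fun i => i ∈ B)).card
          = ∑ _i ∈ (Finset.range n).filter (fun i => i ∈ B), ε := by
            rw [Finset.sum_const, nsmul_eq_mul, mul_comm]
        _ ≤ ∑ i ∈ (Finset.range n).filter (fun i => i ∈ B), u i :=
            Finset.sum_le_sum (fun i hi => (Finset.mem_filter.mp hi).2)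
        _ ≤ ∑ i ∈ Finset.range n, u i :=
            Finset.sum_le_sum_of_subset_of_nonneg (Finset.filter_subset _ _)
              (fun i _ _ => hu i)
    have hle : (((Finset.range n).filter (fun i => i ∈ B)).card : ℝ)
        ≤ (∑ i ∈ Finset.range n, u i) / ε := by
      rw [le_div_iff₀ hε]; linarith [hcard]
    calc (((Finset.range n).filter (fun i => i ∈ B)).card : ℝ) / n
        ≤ ((∑ i ∈ Finset.range n, u i) / ε) / n := by gcongr
      _ = (1 / ε) * ((∑ i ∈ Finset.range n, u i) / n) := by ring
  have htend : Tendsto (dseq B) atTop (nhds 0) := by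
    refine squeeze_zero (fun n => dseq_nonneg B n) key ?_
    have := h.const_mul (1 / ε)
    simpa using this
  rw [upperDensity_eq]
  exact htend.limsup_eq

private lemma omegaBar_subset {X : Type*} [MetricSpace X] (f : X → X) (x y : X)
    (h : Filter.Tendsto
      (fun n : ℕ => (∑ i ∈ Finset.range n, dist (f^[i] x) (f^[i] y)) / n)
      Filter.atTop (nhds 0)) :
    omegaBar f x ⊆ omegaBar f y := by
  intro z hz ε hε
  have hz2 := hz (ε / 2) (by linarith)
  set A : Set ℕ := {i | dist (f^[i] x) z < ε / 2}
  set B : Set ℕ := {i | ε / 2 ≤ dist (f^[i] x) (f^[i] y)}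
  have hB : upperDensity B = 0 :=
    upperDensity_zero_of_avg (fun i => dist_nonneg) h (by linarith)
  have hsub : A \ B ⊆ {i | dist (f^[i] y) z < ε} := by
    intro i hi
    obtain ⟨hiA, hiB⟩ := hi
    simp only [Set.mem_setOf_eq, not_le, A, B] at *
    calc dist (f^[i] y) z ≤ dist (f^[i] y) (f^[i] x) + dist (f^[i] x) z := dist_triangle _ _ _
      _ < ε / 2 + ε / 2 := by rw [dist_comm]; exact add_lt_add hiB hiA
      _ = ε := by ring
  have := upperDensity_le_add A B
  have hmono := upperDensity_mono hsub
  have := hz2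
  linarith

theorem stmt2 {X : Type*} [MetricSpace X] [CompactSpace X] (f : X → X) (hf : Continuous f)
    (x y : X)
    (h : Filter.Tendsto
      (fun n : ℕ => (∑ i ∈ Finset.range n, dist (f^[i] x) (f^[i] y)) / n)
      Filter.atTop (nhds 0)) :
    omegaBar f x = omegaBar f y := by
  have h' : Filter.Tendsto
      (fun n : ℕ => (∑ i ∈ Finset.range n, dist (f^[i] y) (f^[i] x)) / n)
      Filter.atTop (nhds 0) := by
    simpa [dist_comm] using h
  exact Set.Subset.antisymm (omegaBar_subset f x y h) (omegaBar_subset f y x h')
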